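/- arXiv:2207.02636 — 2 statements merged into one kernel-verified Lean document; each statement's English description precedes it below -/
import Mathlib

section
/- Let q be a continuously differentiable probability density on ℝ^d with ‖x‖^{d−1} q(x) → 0 as ‖x‖ → ∞ and ∫ ‖∇ log q‖ dq < ∞, and let p be a probability density with q absolutely continuous with respect to p. Then for any continuously differentiable h : ℝ^d → ℝ^d with h and its first derivatives bounded, ∫ (q(x)/p(x)) [∇·h(x) + ⟨h(x), ∇ log q(x)⟩] p(x) dx = 0. -/
open MeasureTheory Filter EuclideanSpace

private lemma stein_line_eq (n : ℕ) (i : Fin (n+1)) (y : Fin n → ℝ) (t : ℝ) :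
    ((MeasurableEquiv.toLp 2 (Fin (n+1) → ℝ))
        ((MeasurableEquiv.piFinSuccAbove (fun _ => ℝ) i).symm (t, y)))
      = (MeasurableEquiv.toLp 2 (Fin (n+1) → ℝ))
        ((MeasurableEquiv.piFinSuccAbove (fun _ => ℝ) i).symm (0, y))
        + t • EuclideanSpace.single i 1 := by
  ext j
  simp only [MeasurableEquiv.piFinSuccAbove_symm_apply]
  refine Fin.succAboveCases i ?_ ?_ j
  · simp [MeasurableEquiv.coe_toLp, Fin.insertNth_apply_same,
      EuclideanSpace.single_apply]
  · intro k
    simp [MeasurableEquiv.coe_toLp, Fin.insertNth_apply_succAbove,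
      EuclideanSpace.single_apply, Fin.succAbove_ne]

private lemma stein_aux_partial (n : ℕ) (i : Fin (n+1)) (f : EuclideanSpace ℝ (Fin (n+1)) → ℝ)
    (hf : ContDiff ℝ 1 f)
    (hint : Integrable (fun x => fderiv ℝ f x (EuclideanSpace.single i 1)))
    (hdec : Tendsto f (cocompact (EuclideanSpace ℝ (Fin (n+1)))) (nhds 0)) :
    ∫ x, fderiv ℝ f x (EuclideanSpace.single i 1) = 0 := by
  set κ : (ℝ × (Fin n → ℝ)) ≃ᵐ EuclideanSpace ℝ (Fin (n+1)) :=
    (MeasurableEquiv.piFinSuccAbove (fun _ => ℝ) i).symm.trans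
      (MeasurableEquiv.toLp 2 (Fin (n+1) → ℝ)) with hκ
  have mp : MeasurePreserving κ volume volume := by
    rw [Measure.volume_eq_prod]
    exact ((EuclideanSpace.volume_preserving_symm_measurableEquiv_toLp (Fin (n+1))).symm
        (MeasurableEquiv.toLp 2 (Fin (n+1) → ℝ)).symm).comp
      ((MeasureTheory.volume_preserving_piFinSuccAbove (fun _ => ℝ) i).symm
        (MeasurableEquiv.piFinSuccAbove (fun _ => ℝ) i))
  set g : EuclideanSpace ℝ (Fin (n+1)) → ℝ :=
    fun x => fderiv ℝ f x (EuclideanSpace.single i 1) with hg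
  have hgi : Integrable (fun p => g (κ p)) (volume : Measure (ℝ × (Fin n → ℝ))) :=
    (mp.integrable_comp_emb κ.measurableEmbedding).mpr hint
  rw [← mp.integral_comp κ.measurableEmbedding]
  rw [Measure.volume_eq_prod] at hgi ⊢
  rw [MeasureTheory.integral_prod_symm _ hgi]
  have hline : ∀ (y : Fin n → ℝ) (t : ℝ),
      κ (t, y) = κ (0, y) + t • EuclideanSpace.single i 1 := fun y t => stein_line_eq n i y t
  have key : ∀ᵐ y : (Fin n → ℝ), (∫ t : ℝ, g (κ (t, y))) = 0 := by
    filter_upwards [hgi.prod_left_ae] with y hy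
    have hderiv : ∀ t : ℝ, HasDerivAt (fun t => f (κ (t, y))) (g (κ (t, y))) t := by
      intro t
      have hfun : (fun s : ℝ => κ (s, y))
          = fun s => κ (0, y) + s • EuclideanSpace.single i 1 := funext (hline y)
      have h1 : HasDerivAt (fun s : ℝ => κ (s, y)) (EuclideanSpace.single i 1) t := by
        rw [hfun]
        simpa using ((hasDerivAt_id t).smul_const (EuclideanSpace.single i 1)).const_add (κ (0, y))
      exact (hf.differentiable one_ne_zero (κ (t, y))).hasFDerivAt.comp_hasDerivAt t h1
    have htend : ∀ l, Tendsto (fun t : ℝ => |t|) l atTop →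
        Tendsto (fun t => f (κ (t, y))) l (nhds 0) := by
      intro l hl
      apply hdec.comp
      rw [← Metric.cobounded_eq_cocompact, ← tendsto_norm_atTop_iff_cobounded]
      apply tendsto_atTop_mono (fun t => ?_)
        (tendsto_atTop_add_const_right _ (-‖κ (0, y)‖) (hl))
      have : ‖t • EuclideanSpace.single i (1:ℝ)‖ ≤ ‖κ (t, y)‖ + ‖κ (0, y)‖ := by
        rw [hline y t]
        simpa using norm_sub_le (κ (0, y) + t • EuclideanSpace.single i (1:ℝ)) (κ (0, y))
      have hn : ‖t • EuclideanSpace.single i (1:ℝ)‖ = |t| := by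
        simp [norm_smul, EuclideanSpace.norm_single]
      linarith
    have := MeasureTheory.integral_of_hasDerivAt_of_tendsto hderiv hy
      (htend atBot tendsto_abs_atBot_atTop) (htend atTop tendsto_abs_atTop_atTop)
    simpa using this
  calc (∫ y, ∫ t, g (κ (t, y))) = ∫ y : Fin n → ℝ, (0:ℝ) := integral_congr_ae key
    _ = 0 := integral_zero _ _

section
variable {d : ℕ}

private lemma stein_grad_apply (f : EuclideanSpace ℝ (Fin d) → ℝ) (x v : EuclideanSpace ℝ (Fin d)) :
    (inner ℝ (gradient f x) v : ℝ) = fderiv ℝ f x v :=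
  InnerProductSpace.toDual_symm_apply

private lemma stein_grad_norm (f : EuclideanSpace ℝ (Fin d) → ℝ) (x : EuclideanSpace ℝ (Fin d)) :
    ‖gradient f x‖ = ‖fderiv ℝ f x‖ :=
  (InnerProductSpace.toDual ℝ _).symm.norm_map _

private lemma stein_fderiv_zero_of_min (q : EuclideanSpace ℝ (Fin d) → ℝ)
    (hq : ∀ y, 0 ≤ q y) {x : EuclideanSpace ℝ (Fin d)}
    (hx : q x = 0) : fderiv ℝ q x = 0 :=
  IsLocalMin.fderiv_eq_zero (by
    apply Filter.Eventually.of_forall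
    intro y; rw [hx]; exact hq y)

private lemma stein_fderiv_log (q : EuclideanSpace ℝ (Fin d) → ℝ)
    (hq : ContDiff ℝ 1 q) {x : EuclideanSpace ℝ (Fin d)} (hx : q x ≠ 0) :
    fderiv ℝ (fun z => Real.log (q z)) x = (q x)⁻¹ • fderiv ℝ q x :=
  ((Real.hasDerivAt_log hx).comp_hasFDerivAt x (hq.differentiable one_ne_zero x).hasFDerivAt).fderiv

private lemma stein_score_bound (q : EuclideanSpace ℝ (Fin d) → ℝ)
    (hq : ContDiff ℝ 1 q) (hq0 : ∀ y, 0 ≤ q y) (x : EuclideanSpace ℝ (Fin d)) :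
    ‖fderiv ℝ q x‖ ≤ ‖gradient (fun z => Real.log (q z)) x‖ * q x := by
  rcases eq_or_lt_of_le (hq0 x) with hx | hx
  · rw [stein_fderiv_zero_of_min q hq0 hx.symm]
    simp only [norm_zero]
    positivity
  · rw [stein_grad_norm, stein_fderiv_log q hq hx.ne']
    rw [norm_smul, norm_inv, Real.norm_eq_abs, abs_of_pos hx]
    rw [mul_comm ((q x)⁻¹), mul_assoc, inv_mul_cancel₀ hx.ne', mul_one]

private lemma stein_decomp (v : EuclideanSpace ℝ (Fin d)) :
    ∑ i, v i • EuclideanSpace.single i (1:ℝ) = v := by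
  have := (EuclideanSpace.basisFun (Fin d) ℝ).sum_repr v
  simpa [EuclideanSpace.basisFun_apply, EuclideanSpace.basisFun_repr] using this

private lemma stein_fderiv_apply_eq_sum (f : EuclideanSpace ℝ (Fin d) → ℝ)
    (x v : EuclideanSpace ℝ (Fin d)) :
    ∑ i, v i * fderiv ℝ f x (EuclideanSpace.single i 1) = fderiv ℝ f x v := by
  conv_rhs => rw [← stein_decomp v]
  rw [map_sum]
  simp [smul_eq_mul]

private lemma stein_coord_abs_le (w : EuclideanSpace ℝ (Fin d)) (i : Fin d) : |w i| ≤ ‖w‖ := by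
  have h1 := abs_real_inner_le_norm (EuclideanSpace.single i (1:ℝ)) w
  rw [EuclideanSpace.inner_single_left, EuclideanSpace.norm_single] at h1
  simpa using h1

end

theorem stmt_9 (d : ℕ) (p q : EuclideanSpace ℝ (Fin d) → ℝ)
    (hp_nonneg : ∀ x, 0 ≤ p x) (hp_int : ∫ x, p x = 1)
    (hq_nonneg : ∀ x, 0 ≤ q x) (hq_int : ∫ x, q x = 1)
    (hq_smooth : ContDiff ℝ 1 q)
    (habs : ∀ x, p x = 0 → q x = 0)
    (hdecay : Tendsto (fun x : EuclideanSpace ℝ (Fin d) => ‖x‖ ^ (d - 1) * q x)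
      (cocompact (EuclideanSpace ℝ (Fin d))) (nhds 0))
    (hscore_int : Integrable
      (fun x => ‖gradient (fun z => Real.log (q z)) x‖ * q x))
    (h : EuclideanSpace ℝ (Fin d) → EuclideanSpace ℝ (Fin d))
    (hh_smooth : ContDiff ℝ 1 h)
    (hh_bdd : ∃ C, ∀ x, ‖h x‖ ≤ C)
    (hh_deriv_bdd : ∃ C, ∀ x, ‖fderiv ℝ h x‖ ≤ C) :
    ∫ x, (q x / p x) *
        ((∑ i, fderiv ℝ (fun z => h z i) x (single i 1))
          + (inner ℝ (h x) (gradient (fun z => Real.log (q z)) x) : ℝ)) * p x = 0 := by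
  obtain ⟨C₁, hC₁⟩ := hh_bdd
  obtain ⟨C₂, hC₂⟩ := hh_deriv_bdd
  have hC₁0 : 0 ≤ C₁ := le_trans (norm_nonneg _) (hC₁ 0)
  have hq_diff := hq_smooth.differentiable one_ne_zero
  have hh_diff := hh_smooth.differentiable one_ne_zero
  -- coordinate functions of h
  have hhi : ∀ i : Fin d, ContDiff ℝ 1 (fun z => h z i) := fun i =>
    (EuclideanSpace.proj (𝕜 := ℝ) i).contDiff.comp hh_smooth
  have hfid : ∀ (i : Fin d) x, fderiv ℝ (fun z => h z i) x
      = (EuclideanSpace.proj (𝕜 := ℝ) i).comp (fderiv ℝ h x) := fun i x =>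
    ((EuclideanSpace.proj (𝕜 := ℝ) i).hasFDerivAt.comp x (hh_diff x).hasFDerivAt).fderiv
  -- product rule
  have hprod : ∀ (i : Fin d) x, fderiv ℝ (fun z => q z * h z i) x
      = q x • fderiv ℝ (fun z => h z i) x + h x i • fderiv ℝ q x := fun i x =>
    fderiv_mul (hq_diff x) ((hhi i).differentiable one_ne_zero x)
  -- integrability of q
  have hqInt : Integrable q := by
    by_contra hc
    rw [integral_undef hc] at hq_int
    norm_num at hq_int
  -- pointwise identity
  have hpt : ∀ x, (q x / p x) *
        ((∑ i, fderiv ℝ (fun z => h z i) x (single i 1))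
          + (inner ℝ (h x) (gradient (fun z => Real.log (q z)) x) : ℝ)) * p x
      = ∑ i, fderiv ℝ (fun z => q z * h z i) x (single i 1) := by
    intro x
    have hRHS : ∑ i, fderiv ℝ (fun z => q z * h z i) x (single i 1)
        = q x * (∑ i, fderiv ℝ (fun z => h z i) x (single i 1)) + fderiv ℝ q x (h x) := by
      rw [← stein_fderiv_apply_eq_sum q x (h x), Finset.mul_sum, ← Finset.sum_add_distrib]
      refine Finset.sum_congr rfl fun i _ => ?_
      rw [hprod i x]
      simp [smul_eq_mul, mul_comm]
    rcases eq_or_lt_of_le (hq_nonneg x) with hqx | hqx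
    · -- q x = 0
      rw [hRHS, ← hqx, stein_fderiv_zero_of_min q hq_nonneg hqx.symm]
      simp
    · -- q x > 0
      have hpx : p x ≠ 0 := fun hp0 => absurd (habs x hp0) hqx.ne'
      have hinner : (inner ℝ (h x) (gradient (fun z => Real.log (q z)) x) : ℝ)
          = (q x)⁻¹ * fderiv ℝ q x (h x) := by
        rw [real_inner_comm, stein_grad_apply, stein_fderiv_log q hq_smooth hqx.ne']
        simp [smul_eq_mul]
      rw [hRHS, hinner]
      field_simp
  rw [integral_congr_ae (Filter.Eventually.of_forall hpt)]
  -- integrability of each partial derivative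
  have hInt : ∀ i : Fin d,
      Integrable (fun x => fderiv ℝ (fun z => q z * h z i) x (single i 1)) := by
    intro i
    have hfi : ContDiff ℝ 1 (fun z => q z * h z i) := hq_smooth.mul (hhi i)
    have hcont : Continuous (fun x => fderiv ℝ (fun z => q z * h z i) x (single i 1)) :=
      (hfi.continuous_fderiv one_ne_zero).clm_apply continuous_const
    refine Integrable.mono' ((hqInt.const_mul C₂).add (hscore_int.const_mul C₁))
      hcont.aestronglyMeasurable (Filter.Eventually.of_forall fun x => ?_)
    rw [hprod i x]
    have hb1 : |fderiv ℝ (fun z => h z i) x (single i 1)| ≤ C₂ := by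
      rw [hfid i x]
      refine le_trans (stein_coord_abs_le (fderiv ℝ h x (single i 1)) i) ?_
      calc ‖fderiv ℝ h x (single i 1)‖ ≤ ‖fderiv ℝ h x‖ * ‖single i (1:ℝ)‖ :=
            (fderiv ℝ h x).le_opNorm _
        _ ≤ C₂ := by rw [EuclideanSpace.norm_single, norm_one, mul_one]; exact hC₂ x
    have hb2 : |fderiv ℝ q x (single i 1)|
        ≤ ‖gradient (fun z => Real.log (q z)) x‖ * q x := by
      refine le_trans ?_ (stein_score_bound q hq_smooth hq_nonneg x)
      calc |fderiv ℝ q x (single i 1)| ≤ ‖fderiv ℝ q x‖ * ‖single i (1:ℝ)‖ :=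
            (fderiv ℝ q x).le_opNorm _
        _ = ‖fderiv ℝ q x‖ := by rw [EuclideanSpace.norm_single]; simp
    have hb3 : |h x i| ≤ C₁ := le_trans (stein_coord_abs_le (h x) i) (hC₁ x)
    have hqx := hq_nonneg x
    calc ‖(q x • fderiv ℝ (fun z => h z i) x + h x i • fderiv ℝ q x) (single i 1)‖
        = |q x * fderiv ℝ (fun z => h z i) x (single i 1)
            + h x i * fderiv ℝ q x (single i 1)| := by
          simp [Real.norm_eq_abs, smul_eq_mul]
      _ ≤ q x * |fderiv ℝ (fun z => h z i) x (single i 1)|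
            + |h x i| * |fderiv ℝ q x (single i 1)| := by
          refine le_trans (abs_add_le _ _) ?_
          rw [abs_mul, abs_mul, abs_of_nonneg hqx]
      _ ≤ q x * C₂ + C₁ * (‖gradient (fun z => Real.log (q z)) x‖ * q x) :=
          add_le_add (mul_le_mul_of_nonneg_left hb1 hqx)
            (mul_le_mul hb3 hb2 (abs_nonneg _) hC₁0)
      _ = C₂ * q x + C₁ * (‖gradient (fun z => Real.log (q z)) x‖ * q x) := by ring
  rw [integral_finset_sum _ (fun i _ => hInt i)]
  refine Finset.sum_eq_zero fun i _ => ?_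
  -- decay of q and of q * h_i
  have hqdec : Tendsto q (cocompact (EuclideanSpace ℝ (Fin d))) (nhds 0) := by
    refine squeeze_zero' ?_ ?_ hdecay
    · exact Filter.Eventually.of_forall hq_nonneg
    · filter_upwards [(isCompact_closedBall (0 : EuclideanSpace ℝ (Fin d)) 1).compl_mem_cocompact]
        with x hx
      have hx1 : 1 ≤ ‖x‖ := by
        simp only [Set.mem_compl_iff, Metric.mem_closedBall, dist_zero_right, not_le] at hx
        exact hx.le
      exact le_mul_of_one_le_left (hq_nonneg x) (one_le_pow₀ hx1)
  have hfidec : Tendsto (fun x => q x * h x i)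
      (cocompact (EuclideanSpace ℝ (Fin d))) (nhds 0) := by
    have : Tendsto (fun x => C₁ * q x) (cocompact (EuclideanSpace ℝ (Fin d))) (nhds 0) := by
      simpa using hqdec.const_mul C₁
    refine squeeze_zero_norm (fun x => ?_) this
    rw [Real.norm_eq_abs, abs_mul, abs_of_nonneg (hq_nonneg x), mul_comm]
    exact mul_le_mul_of_nonneg_right (le_trans (stein_coord_abs_le (h x) i) (hC₁ x)) (hq_nonneg x)
  obtain ⟨n, rfl⟩ : ∃ n, d = n + 1 := ⟨d - 1, by have := i.pos; omega⟩
  exact stein_aux_partial n i (fun z => q z * h z i) (hq_smooth.mul (hhi i)) (hInt i) hfidec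
end

section
/- Let p be a continuous probability density on ℝ^d, q a continuous positive probability density, and (π_n) a sequence of probability measures such that the reweighted measures π̄_n (with dπ̄_n ∝ (q/p) dπ_n, normalising constants Z_n = ∫ (q/p) dπ_n) converge weakly to q and Z_n are bounded away from 0. If π̄_n converges weakly to q and Z_n⁻¹ → 1, then π_n converges weakly to p. -/
open MeasureTheory Filter
open scoped ENNReal NNReal

theorem stmt_13 (d : ℕ) (p q : EuclideanSpace ℝ (Fin d) → ℝ)
    (hp_cont : Continuous p) (hp_nonneg : ∀ x, 0 ≤ p x) (hp_int : ∫ x, p x = 1)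
    (hq_cont : Continuous q) (hq_pos : ∀ x, 0 < q x) (hq_int : ∫ x, q x = 1)
    (π : ℕ → Measure (EuclideanSpace ℝ (Fin d))) (hπ : ∀ n, IsProbabilityMeasure (π n))
    (Z : ℕ → ℝ) (hZ : ∀ n, Z n = ∫ x, q x / p x ∂(π n))
    (hZ_bdd : ∃ c > 0, ∀ n, c ≤ Z n)
    (hZ_lim : Tendsto (fun n => (Z n)⁻¹) atTop (nhds 1))
    (hweak : ∀ g : BoundedContinuousFunction (EuclideanSpace ℝ (Fin d)) ℝ,
      Tendsto (fun n => ∫ x, g x ∂((π n).withDensity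
          (fun x => ENNReal.ofReal ((q x / p x) / Z n))))
        atTop (nhds (∫ x, g x * q x))) :
    ∀ g : BoundedContinuousFunction (EuclideanSpace ℝ (Fin d)) ℝ,
      Tendsto (fun n => ∫ x, g x ∂(π n)) atTop (nhds (∫ x, g x * p x)) := by
  classical
  obtain ⟨c, hc, hcZ⟩ := hZ_bdd
  have hZpos : ∀ n, 0 < Z n := fun n => lt_of_lt_of_le hc (hcZ n)
  have hZne : ∀ n, Z n ≠ 0 := fun n => (hZpos n).ne'
  have hZtend : Tendsto Z atTop (nhds 1) := by
    have := hZ_lim.inv₀ one_ne_zero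
    simpa [inv_inv] using this
  set μ : ℕ → Measure (EuclideanSpace ℝ (Fin d)) := fun n => (π n).withDensity
      (fun x => ENNReal.ofReal ((q x / p x) / Z n)) with hμ
  -- key identity
  have key : ∀ (n : ℕ) (φ : EuclideanSpace ℝ (Fin d) → ℝ),
      Z n * ∫ x, φ x ∂(μ n) = ∫ x, (q x / p x) * φ x ∂(π n) := by
    intro n φ
    have fmeas : Measurable fun x => ((q x / p x) / Z n).toNNReal :=
      ((hq_cont.measurable.div hp_cont.measurable).div_const _).real_toNNReal
    have h1 : ∫ x, φ x ∂(μ n) = ∫ x, ((q x / p x) / Z n) * φ x ∂(π n) := by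
      have h := integral_withDensity_eq_integral_smul fmeas φ (μ := π n)
      rw [hμ]
      simp only []
      rw [show (fun x => ENNReal.ofReal ((q x / p x) / Z n))
          = (fun x => (((q x / p x) / Z n).toNNReal : ℝ≥0∞)) from rfl]
      rw [h]
      refine integral_congr_ae (Eventually.of_forall fun x => ?_)
      have hnn : 0 ≤ (q x / p x) / Z n :=
        div_nonneg (div_nonneg (hq_pos x).le (hp_nonneg x)) (hZpos n).le
      simp [NNReal.smul_def, Real.coe_toNNReal _ hnn]
    rw [h1, ← integral_const_mul]
    refine integral_congr_ae (Eventually.of_forall fun x => ?_)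
    have hx : Z n * (q x / p x / Z n * φ x)
        = (Z n * (Z n)⁻¹) * (q x / p x * φ x) := by
      rw [div_eq_mul_inv (q x / p x) (Z n)]; ring
    show Z n * (q x / p x / Z n * φ x) = q x / p x * φ x
    rw [hx, mul_inv_cancel₀ (hZne n), one_mul]
  intro g
  set C := ‖g‖ with hC
  have Tcont : ∀ m : ℕ, Continuous fun x => min (p x / q x) (m : ℝ) :=
    fun m => (hp_cont.div hq_cont fun x => (hq_pos x).ne').min continuous_const
  have Tbd : ∀ (m : ℕ) (x : EuclideanSpace ℝ (Fin d)),
      ‖min (p x / q x) (m : ℝ)‖ ≤ (m : ℝ) := by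
    intro m x
    rw [Real.norm_eq_abs, abs_le]
    constructor
    · have h : (0:ℝ) ≤ min (p x / q x) (m : ℝ) :=
        le_min (div_nonneg (hp_nonneg x) (hq_pos x).le) (Nat.cast_nonneg m)
      have : (0:ℝ) ≤ (m:ℝ) := Nat.cast_nonneg m
      linarith
    · exact min_le_right _ _
  set T : ℕ → BoundedContinuousFunction (EuclideanSpace ℝ (Fin d)) ℝ := fun m =>
    BoundedContinuousFunction.ofNormedAddCommGroup _ (Tcont m) (m : ℝ) (Tbd m) with hT
  have Tapp : ∀ m x, T m x = min (p x / q x) (m : ℝ) := fun m x => rfl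
  set u : ℕ → EuclideanSpace ℝ (Fin d) → ℝ :=
    fun m x => (q x / p x) * min (p x / q x) (m : ℝ) with hu
  have humeas : ∀ m, Measurable (u m) := fun m =>
    (hq_cont.measurable.div hp_cont.measurable).mul (Tcont m).measurable
  have hu0 : ∀ m x, 0 ≤ u m x := fun m x =>
    mul_nonneg (div_nonneg (hq_pos x).le (hp_nonneg x))
      (le_min (div_nonneg (hp_nonneg x) (hq_pos x).le) (Nat.cast_nonneg m))
  have hu1 : ∀ m x, u m x ≤ 1 := by
    intro m x
    by_cases hpx : p x = 0
    · simp only [hu, hpx, div_zero, zero_mul]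
      exact zero_le_one
    · have hpx' : 0 < p x := lt_of_le_of_ne (hp_nonneg x) (Ne.symm hpx)
      calc u m x ≤ (q x / p x) * (p x / q x) :=
            mul_le_mul_of_nonneg_left (min_le_left _ _)
              (div_nonneg (hq_pos x).le (hp_nonneg x))
        _ = 1 := by
              rw [div_mul_div_comm, mul_comm (q x) (p x)]
              exact div_self (mul_ne_zero hpx (hq_pos x).ne')
  have int_u : ∀ n m, Integrable (u m) (π n) := by
    intro n m
    have := hπ n
    refine (integrable_const (1:ℝ)).mono' (humeas m).aestronglyMeasurable ?_
    refine Eventually.of_forall fun x => ?_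
    rw [Real.norm_eq_abs, abs_of_nonneg (hu0 m x)]
    simpa using hu1 m x
  have int_gu : ∀ n m, Integrable (fun x => g x * u m x) (π n) := by
    intro n m
    have := hπ n
    refine (integrable_const C).mono'
      (g.continuous.measurable.mul (humeas m)).aestronglyMeasurable ?_
    refine Eventually.of_forall fun x => ?_
    rw [Real.norm_eq_abs, abs_mul]
    calc |g x| * |u m x| ≤ C * 1 := by
          apply mul_le_mul (g.norm_coe_le_norm x) _ (abs_nonneg _) (norm_nonneg g)
          rw [abs_of_nonneg (hu0 m x)]; exact hu1 m x
      _ = C := mul_one C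
  have int_g : ∀ n, Integrable (fun x => g x) (π n) := by
    intro n; have := hπ n; exact g.integrable (π n)
  -- main bound
  have hbound : ∀ n m,
      |(∫ x, g x ∂(π n)) - Z n * ∫ x, (g * T m) x ∂(μ n)|
        ≤ C * (1 - Z n * ∫ x, (T m) x ∂(μ n)) := by
    intro n m
    have := hπ n
    have h1 : Z n * ∫ x, (g * T m) x ∂(μ n) = ∫ x, g x * u m x ∂(π n) := by
      rw [key n]
      refine integral_congr_ae (Eventually.of_forall fun x => ?_)
      simp only [BoundedContinuousFunction.coe_mul, Pi.mul_apply, Tapp, hu]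
      ring
    have h2 : Z n * ∫ x, (T m) x ∂(μ n) = ∫ x, u m x ∂(π n) := by
      rw [key n]
      exact integral_congr_ae (Eventually.of_forall fun x => rfl)
    rw [h1, h2]
    rw [← integral_sub (int_g n) (int_gu n m)]
    have h3 : ∀ x : EuclideanSpace ℝ (Fin d),
        g x - g x * u m x = g x * (1 - u m x) := fun x => by ring
    calc |∫ x, (g x - g x * u m x) ∂(π n)|
        = ‖∫ x, (g x - g x * u m x) ∂(π n)‖ := (Real.norm_eq_abs _).symm
      _ ≤ ∫ x, ‖g x - g x * u m x‖ ∂(π n) := norm_integral_le_integral_norm _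
      _ ≤ ∫ x, C * (1 - u m x) ∂(π n) := by
          refine integral_mono ((int_g n).sub (int_gu n m)).norm
            (((integrable_const (1:ℝ)).sub (int_u n m)).const_mul C) fun x => ?_
          rw [h3 x, Real.norm_eq_abs, abs_mul,
            abs_of_nonneg (by linarith [hu1 m x] : (0:ℝ) ≤ 1 - u m x)]
          exact mul_le_mul_of_nonneg_right (g.norm_coe_le_norm x)
            (by linarith [hu1 m x])
      _ = C * (1 - ∫ x, u m x ∂(π n)) := by
          rw [integral_const_mul, integral_sub (integrable_const 1) (int_u n m)]
          simp
  -- limits in n for fixed m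
  have hKn : ∀ m, Tendsto (fun n => Z n * ∫ x, (T m) x ∂(μ n)) atTop
      (nhds (∫ x, (T m) x * q x)) := by
    intro m
    have := hZtend.mul (hweak (T m))
    simpa using this
  have hJn : ∀ m, Tendsto (fun n => Z n * ∫ x, (g * T m) x ∂(μ n)) atTop
      (nhds (∫ x, (g * T m) x * q x)) := by
    intro m
    have := hZtend.mul (hweak (g * T m))
    simpa using this
  have int_p : Integrable p := by
    by_contra h
    rw [integral_undef h] at hp_int
    norm_num at hp_int
  have hTq : ∀ (m : ℕ) (x : EuclideanSpace ℝ (Fin d)),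
      min (p x / q x) (m : ℝ) * q x = min (p x) ((m : ℝ) * q x) := by
    intro m x
    rw [min_mul_of_nonneg _ _ (hq_pos x).le, div_mul_cancel₀ _ (hq_pos x).ne']
  have hptwise : ∀ x : EuclideanSpace ℝ (Fin d),
      Tendsto (fun m : ℕ => min (p x) ((m : ℝ) * q x)) atTop (nhds (p x)) := by
    intro x
    refine tendsto_const_nhds.congr' ?_
    filter_upwards [eventually_ge_atTop ⌈p x / q x⌉₊] with m hm
    have : p x ≤ (m : ℝ) * q x := by
      rw [← div_le_iff₀ (hq_pos x)]
      exact le_trans (Nat.le_ceil _) (by exact_mod_cast hm)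
    rw [min_eq_left this]
  -- limits in m
  have hKm : Tendsto (fun m : ℕ => ∫ x, (T m) x * q x) atTop (nhds 1) := by
    rw [← hp_int]
    have hrw : ∀ m : ℕ, (fun x : EuclideanSpace ℝ (Fin d) => (T m) x * q x)
        = fun x => min (p x) ((m:ℝ) * q x) := by
      intro m; funext x; rw [Tapp, hTq]
    simp only [hrw]
    refine tendsto_integral_of_dominated_convergence p
      (fun m => ((hp_cont.min (continuous_const.mul hq_cont))).aestronglyMeasurable)
      int_p ?_ (Eventually.of_forall hptwise)
    intro m
    refine Eventually.of_forall fun x => ?_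
    rw [Real.norm_eq_abs, abs_of_nonneg (le_min (hp_nonneg x)
      (mul_nonneg (Nat.cast_nonneg m) (hq_pos x).le))]
    exact min_le_left _ _
  have hJm : Tendsto (fun m : ℕ => ∫ x, (g * T m) x * q x) atTop
      (nhds (∫ x, g x * p x)) := by
    have hrw : ∀ m : ℕ, (fun x : EuclideanSpace ℝ (Fin d) => (g * T m) x * q x)
        = fun x => g x * min (p x) ((m:ℝ) * q x) := by
      intro m; funext x
      simp only [BoundedContinuousFunction.coe_mul, Pi.mul_apply, Tapp]
      rw [mul_assoc, hTq]
    simp only [hrw]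
    refine tendsto_integral_of_dominated_convergence (fun x => C * p x)
      (fun m => (g.continuous.mul
        (hp_cont.min (continuous_const.mul hq_cont))).aestronglyMeasurable)
      (int_p.const_mul C) ?_
      (Eventually.of_forall fun x => (tendsto_const_nhds.mul (hptwise x)))
    intro m
    refine Eventually.of_forall fun x => ?_
    rw [Real.norm_eq_abs, abs_mul,
      abs_of_nonneg (le_min (hp_nonneg x) (mul_nonneg (Nat.cast_nonneg m) (hq_pos x).le))]
    exact mul_le_mul (g.norm_coe_le_norm x) (min_le_left _ _)
      (le_min (hp_nonneg x) (mul_nonneg (Nat.cast_nonneg m) (hq_pos x).le)) (norm_nonneg g)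
  -- final assembly
  rw [Metric.tendsto_atTop]
  intro ε hε
  have hCK : Tendsto (fun m : ℕ => C * (1 - ∫ x, (T m) x * q x)) atTop (nhds 0) := by
    have := (tendsto_const_nhds (x := C) (f := atTop (α := ℕ))).mul
      ((tendsto_const_nhds (x := (1:ℝ)) (f := atTop (α := ℕ))).sub hKm)
    simpa using this
  have h1 : ∀ᶠ m : ℕ in atTop, C * (1 - ∫ x, (T m) x * q x) < ε/4 :=
    hCK.eventually (eventually_lt_nhds (by linarith))
  have h2 : ∀ᶠ m : ℕ in atTop,
      dist (∫ x, (g * T m) x * q x) (∫ x, g x * p x) < ε/4 := by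
    obtain ⟨N, hN⟩ := Metric.tendsto_atTop.mp hJm (ε/4) (by linarith)
    exact eventually_atTop.2 ⟨N, hN⟩
  obtain ⟨m, hm1, hm2⟩ := (h1.and h2).exists
  have hCKn : Tendsto (fun n => C * (1 - Z n * ∫ x, (T m) x ∂(μ n))) atTop
      (nhds (C * (1 - ∫ x, (T m) x * q x))) :=
    tendsto_const_nhds.mul (tendsto_const_nhds.sub (hKn m))
  have h3 : ∀ᶠ n : ℕ in atTop, C * (1 - Z n * ∫ x, (T m) x ∂(μ n)) < ε/2 :=
    hCKn.eventually (eventually_lt_nhds (by linarith))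
  have h4 : ∀ᶠ n : ℕ in atTop,
      dist (Z n * ∫ x, (g * T m) x ∂(μ n)) (∫ x, (g * T m) x * q x) < ε/4 := by
    obtain ⟨N, hN⟩ := Metric.tendsto_atTop.mp (hJn m) (ε/4) (by linarith)
    exact eventually_atTop.2 ⟨N, hN⟩
  obtain ⟨N, hN⟩ := eventually_atTop.mp (h3.and h4)
  refine ⟨N, fun n hn => ?_⟩
  obtain ⟨hn3, hn4⟩ := hN n hn
  have hb := hbound n m
  calc dist (∫ x, g x ∂(π n)) (∫ x, g x * p x)
      ≤ dist (∫ x, g x ∂(π n)) (Z n * ∫ x, (g * T m) x ∂(μ n))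
        + dist (Z n * ∫ x, (g * T m) x ∂(μ n)) (∫ x, (g * T m) x * q x)
        + dist (∫ x, (g * T m) x * q x) (∫ x, g x * p x) := dist_triangle4 _ _ _ _
    _ < ε/2 + ε/4 + ε/4 := by
        refine add_lt_add (add_lt_add_of_le_of_lt ?_ hn4) hm2
        rw [Real.dist_eq]
        exact le_of_lt (lt_of_le_of_lt hb hn3)
    _ = ε := by ring
end
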